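/- Let X be a finite nonempty quasimetric space and for r ≥ 0 let N_X(r) denote the minimal cardinality of an r-deformation retract of X (equivalently, the cardinality of an r-minimal model of X). Then the function N_X : [0,∞) → ℕ is antitone (r ≤ r' implies N_X(r') ≤ N_X(r)), takes finitely many values, and is lower semi-continuous; more precisely, for every r ≥ 0 there exists ε > 0 such that N_X(r') = N_X(r) for all r' ∈ [r, r+ε). -/

import Mathlib

open scoped ENNReal

class QuasiMetric (X : Type*) where
  qdist : X → X → ℝ≥0∞
  qdist_triangle : ∀ x y z : X, qdist x z ≤ qdist x y + qdist y z
  qdist_eq_zero_iff : ∀ x y : X, qdist x y = 0 ↔ x = y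

open QuasiMetric

instance {X : Type*} [QuasiMetric X] (A : Set X) : QuasiMetric A where
  qdist a b := qdist a.1 b.1
  qdist_triangle a b c := qdist_triangle a.1 b.1 c.1
  qdist_eq_zero_iff a b := (qdist_eq_zero_iff a.1 b.1).trans Subtype.coe_inj

/-- A map of quasimetric spaces is short (1-Lipschitz). -/
def IsShort {X Y : Type*} [QuasiMetric X] [QuasiMetric Y] (f : X → Y) : Prop :=
  ∀ x x' : X, qdist (f x) (f x') ≤ qdist x x'

/-- The distance `d(f,g) = sup_x d(f x, g x)` on maps. -/
noncomputable def mapDist {X Y : Type*} [QuasiMetric X] [QuasiMetric Y] (f g : X → Y) : ℝ≥0∞ :=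
  ⨆ x : X, qdist (f x) (g x)

/-- Two short maps are `r`-homotopic if they are connected by a chain of short maps
in which each consecutive pair is at distance `≤ r` in one direction or the other. -/
def MapHomotopic {X Y : Type*} [QuasiMetric X] [QuasiMetric Y] (r : ℝ) (f g : X → Y) : Prop :=
  Relation.ReflTransGen
    (fun u v : X → Y => IsShort u ∧ IsShort v ∧
      (mapDist u v ≤ ENNReal.ofReal r ∨ mapDist v u ≤ ENNReal.ofReal r)) f g

/-- `A ⊆ X` is an `r`-deformation retract of `X`. -/
def IsDefRetract {X : Type*} [QuasiMetric X] (r : ℝ) (A : Set X) : Prop :=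
  ∃ ρ : X → A, IsShort ρ ∧ (∀ a : A, ρ (a : X) = a) ∧
    MapHomotopic r (fun x => (ρ x : X)) id

/-- A quasimetric space is `r`-minimal if it has no proper `r`-deformation retract. -/
def RMinimal (r : ℝ) (X : Type*) [QuasiMetric X] : Prop :=
  ∀ A : Set X, IsDefRetract r A → A = Set.univ

/-- A distance-preserving bijection. -/
def IsIsometry {X Y : Type*} [QuasiMetric X] [QuasiMetric Y] (f : X → Y) : Prop :=
  Function.Bijective f ∧ ∀ x x' : X, qdist (f x) (f x') = qdist x x'

/-- Two quasimetric spaces are `r`-homotopy equivalent. -/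
def RHomotopyEquivalent (r : ℝ) (X Y : Type*) [QuasiMetric X] [QuasiMetric Y] : Prop :=
  ∃ f : X → Y, ∃ g : Y → X, IsShort f ∧ IsShort g ∧
    MapHomotopic r (g ∘ f) id ∧ MapHomotopic r (f ∘ g) id

lemma retract_of_imp {X : Type*} [QuasiMetric X] {r r' : ℝ}
    (h : ∀ u v : X → X, mapDist u v ≤ ENNReal.ofReal r' → mapDist u v ≤ ENNReal.ofReal r)
    {A : Set X} (hA : IsDefRetract r' A) : IsDefRetract r A := by
  obtain ⟨ρ, h1, h2, h3⟩ := hA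
  exact ⟨ρ, h1, h2, Relation.ReflTransGen.mono (by rintro u v ⟨hu, hv, hd⟩; exact
    ⟨hu, hv, hd.imp (h u v) (h v u)⟩) _ _ h3⟩

lemma retract_mono {X : Type*} [QuasiMetric X] {r r' : ℝ} (h : r ≤ r') {A : Set X}
    (hA : IsDefRetract r A) : IsDefRetract r' A :=
  retract_of_imp (fun _ _ hd => hd.trans (ENNReal.ofReal_le_ofReal h)) hA

lemma univ_retract {X : Type*} [QuasiMetric X] (r : ℝ) :
    IsDefRetract r (Set.univ : Set X) := by
  refine ⟨fun x => ⟨x, trivial⟩, fun x x' => le_refl _, fun a => Subtype.ext rfl, ?_⟩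
  exact Relation.ReflTransGen.refl

theorem stmt_9 {X : Type*} [QuasiMetric X] [Finite X] [Nonempty X] :
    let N : ℝ → ℕ := fun r => sInf {k : ℕ | ∃ A : Set X, IsDefRetract r A ∧ Nat.card A = k}
    (∀ r r' : ℝ, 0 ≤ r → r ≤ r' → N r' ≤ N r) ∧
    (N '' Set.Ici 0).Finite ∧
    (∀ r : ℝ, 0 ≤ r → ∃ ε > 0, ∀ r' : ℝ, r ≤ r' → r' < r + ε → N r' = N r) := by
  intro N
  set S : ℝ → Set ℕ := fun r => {k : ℕ | ∃ A : Set X, IsDefRetract r A ∧ Nat.card A = k} with hS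
  have hne : ∀ r : ℝ, (S r).Nonempty := fun r =>
    ⟨Nat.card (Set.univ : Set X), Set.univ, univ_retract r, rfl⟩
  have hmono : ∀ r r' : ℝ, r ≤ r' → N r' ≤ N r := by
    intro r r' h
    have hm : N r ∈ S r := Nat.sInf_mem (hne r)
    obtain ⟨A, hA, hcard⟩ := hm
    exact Nat.sInf_le ⟨A, retract_mono h hA, hcard⟩
  refine ⟨fun r r' _ h => hmono r r' h, ?_, ?_⟩
  · have hsub : N '' Set.Ici 0 ⊆ Set.Iic (Nat.card (Set.univ : Set X)) := by
      rintro k ⟨r, -, rfl⟩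
      exact Nat.sInf_le ⟨Set.univ, univ_retract r, rfl⟩
    exact (Set.finite_Iic _).subset hsub
  · intro r hr
    set D : Set ℝ≥0∞ := Set.range (fun p : (X → X) × (X → X) => mapDist p.1 p.2) with hD
    have hDfin : D.Finite := Set.finite_range _
    set T : Set ℝ≥0∞ := D ∩ Set.Ioi (ENNReal.ofReal r) with hT
    have hTfin : T.Finite := hDfin.inter_of_left _
    have hkey : ∃ ε > 0, ∀ r' : ℝ, r ≤ r' → r' < r + ε →
        ∀ d ∈ D, d ≤ ENNReal.ofReal r' → d ≤ ENNReal.ofReal r := by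
      by_cases hTne : T.Nonempty
      · set m : ℝ≥0∞ := hTfin.toFinset.min' (by simpa using hTne) with hm
        have hmT : m ∈ T := by
          have := hTfin.toFinset.min'_mem (by simpa using hTne)
          simpa using this
        have hmle : ∀ d ∈ T, m ≤ d := by
          intro d hd
          exact hTfin.toFinset.min'_le d (by simpa using hd)
        have hmgt : ENNReal.ofReal r < m := hmT.2
        have hm0 : m ≠ 0 := fun h => by simp [h] at hmgt
        by_cases hmtop : m = ⊤
        · refine ⟨1, one_pos, fun r' _ _ d hdD hdle => ?_⟩
          by_contra hcon
          have hdT : d ∈ T := ⟨hdD, lt_of_not_ge hcon⟩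
          have := hmle d hdT
          rw [hmtop] at this
          exact (hdle.trans_lt (by simp : ENNReal.ofReal r' < ⊤)).ne (top_le_iff.mp this)
        · have hrm : r < m.toReal := by
            have := (ENNReal.ofReal_lt_iff_lt_toReal hr hmtop).mp hmgt
            exact this
          refine ⟨m.toReal - r, by linarith, fun r' hrr' hr' d hdD hdle => ?_⟩
          by_contra hcon
          have hdT : d ∈ T := ⟨hdD, lt_of_not_ge hcon⟩
          have h1 : m ≤ d := hmle d hdT
          have h2 : ENNReal.ofReal r' < m := by
            rw [← ENNReal.ofReal_toReal hmtop]
            exact (ENNReal.ofReal_lt_ofReal_iff (by linarith)).mpr (by linarith)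
          exact absurd (hdle.trans_lt h2) (not_lt.mpr h1)
      · refine ⟨1, one_pos, fun r' _ _ d hdD _ => ?_⟩
        by_contra hcon
        exact hTne ⟨d, hdD, lt_of_not_ge hcon⟩
    obtain ⟨ε, hε, hεp⟩ := hkey
    refine ⟨ε, hε, fun r' hrr' hr' => ?_⟩
    have h1 : N r' ≤ N r := hmono r r' hrr'
    have h2 : N r ≤ N r' := by
      have hm : N r' ∈ S r' := Nat.sInf_mem (hne r')
      obtain ⟨A, hA, hcard⟩ := hm
      have hA' : IsDefRetract r A :=
        retract_of_imp (fun u v hd => hεp r' hrr' hr' _ ⟨(u, v), rfl⟩ hd) hA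
      exact Nat.sInf_le ⟨A, hA', hcard⟩
    exact le_antisymm h1 h2
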